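/- Let H be the Thue–Morse substitution and let x ∈ {0,1}^ℕ begin with the word 111 (so that x ∉ K and δ(x) = 2). Then for every integer n ≥ 1: δ(σ^k(H^n(x))) = 2^{n+1} − k for all 0 ≤ k < 2^{n−1}, and δ(σ^{2^{n−1}+l}(H^n(x))) = 2^{n+1} − l for all 0 ≤ l ≤ 2^{n−1} − 1. In particular H^n(x) has an accident at time 2^{n−1}. -/

import Mathlib

open Filter Topology MeasureTheory

variable {A : Type*}

/-- The shift map on infinite words. -/
def shift (x : ℕ → A) : ℕ → A := fun n => x (n + 1)

/-- Image of a finite word under a substitution. -/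
def wordMap (H : A → List A) (w : List A) : List A := w.flatMap H

/-- Image of an infinite word under a substitution (each `H a` nonempty makes this the
infinite concatenation `H(x₀)H(x₁)⋯`). -/
def substSeq (H : A → List A) (x : ℕ → A) : ℕ → A :=
  fun n => (wordMap H ((List.range (n + 1)).map x)).getD n (x 0)

/-- The prefix of length `n` of an infinite word. -/
def prefixWord (x : ℕ → A) (n : ℕ) : List A := (List.range n).map x

/-- The factor of length `n` at position `i` of an infinite word. -/
def factorAt (x : ℕ → A) (i n : ℕ) : List A := (List.range n).map fun j => x (i + j)

/-- The language of an infinite word: the set of its finite factors. -/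
def Lang (u : ℕ → A) : Set (List A) := {w | ∃ i, w = factorAt u i w.length}

/-- A sequence is (purely) periodic for the shift. -/
def PeriodicSeq (x : ℕ → A) : Prop := ∃ m, 0 < m ∧ ∀ n, x (n + m) = x n

/-- `u` is a fixed point of the substitution `H`. -/
def IsFixedPointSubst (H : A → List A) (u : ℕ → A) : Prop := substSeq H u = u

/-- `H` is primitive: some power of `H` maps every letter onto a word containing
every letter. -/
def PrimitiveSubst (H : A → List A) : Prop :=
  ∃ k, 0 < k ∧ ∀ a b : A, b ∈ (wordMap H)^[k] [a]

/-- `H` is aperiodic: no fixed point of `H` is periodic for the shift. -/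
def AperiodicSubst (H : A → List A) : Prop :=
  ∀ u : ℕ → A, IsFixedPointSubst H u → ¬ PeriodicSeq u

/-- `H` is marked: first letters of images are pairwise distinct, and so are last letters. -/
def MarkedSubst (H : A → List A) (hne : ∀ a, H a ≠ []) : Prop :=
  Function.Injective (fun a => (H a).head (hne a)) ∧
  Function.Injective (fun a => (H a).getLast (hne a))

/-- `H` is 2-full (with respect to the fixed point `u`): every word of length 2 belongs
to the language. -/
def TwoFull (H : A → List A) (u : ℕ → A) : Prop :=
  ∀ w : List A, w.length = 2 → w ∈ Lang u

/-- The attractor `K`: closure of the shift-orbit of the fixed point `u`. -/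
def orbitClosure [TopologicalSpace A] (u : ℕ → A) : Set (ℕ → A) :=
  closure {y | ∃ n, y = shift^[n] u}

/-- `δ(x)`: the length of the maximal prefix of `x` belonging to the language of `u`. -/
noncomputable def delta (u x : ℕ → A) : ℕ := sSup {n | prefixWord x n ∈ Lang u}

/-- The renormalization operator `R`. -/
noncomputable def renorm (H : A → List A) (V : (ℕ → A) → ℝ) : (ℕ → A) → ℝ :=
  fun x => ∑ i ∈ Finset.range (H (x 0)).length, V (shift^[i] (substSeq H x))

/-- `t_n(x) = |H^n(x₀)|`. -/
def tlen (H : A → List A) (n : ℕ) (x : ℕ → A) : ℕ := ((wordMap H)^[n] [x 0]).length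

/-- An accident occurs at time `b`. -/
def AccidentAt (u x : ℕ → A) (b : ℕ) : Prop :=
  0 < b ∧ delta u x - b < delta u (shift^[b] x) ∧
    ∀ i < b, delta u (shift^[i] x) = delta u x - i

/-- The first accident time of `x` (junk value `0` if there is none). -/
noncomputable def firstAccident (u x : ℕ → A) : ℕ := sInf {b | AccidentAt u x b}

/-- The `j`-th accident time `B_j` of `x`, defined inductively. -/
noncomputable def accidentTime (u x : ℕ → A) : ℕ → ℕ
  | 0 => 0
  | j + 1 => accidentTime u x j + firstAccident u (shift^[accidentTime u x j] x)

/-- The set of (genuine) accident times of `x`. -/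
def AccidentSet (u x : ℕ → A) : Set ℕ :=
  {B | ∃ j : ℕ, B = accidentTime u x (j + 1) ∧
        AccidentAt u (shift^[accidentTime u x j] x)
          (firstAccident u (shift^[accidentTime u x j] x))}

/-- A word is right special. -/
def RightSpecial (u : ℕ → A) (w : List A) : Prop :=
  ∃ b c : A, b ≠ c ∧ w ++ [b] ∈ Lang u ∧ w ++ [c] ∈ Lang u

/-- A word is left special. -/
def LeftSpecial (u : ℕ → A) (w : List A) : Prop :=
  ∃ a b : A, a ≠ b ∧ a :: w ∈ Lang u ∧ b :: w ∈ Lang u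

/-- A word is bispecial. -/
def Bispecial (u : ℕ → A) (w : List A) : Prop := RightSpecial u w ∧ LeftSpecial u w

/-- `l` is a recognizability constant for `H`: every long enough word of the language
admits a unique desubstitution. -/
def RecogBound (H : A → List A) (u : ℕ → A) (l : ℕ) : Prop :=
  ∀ z ∈ Lang u, l < z.length →
    ∃! d : List A × List A × List A,
      ∃ s p : A,
        z = d.1 ++ wordMap H d.2.1 ++ d.2.2 ∧
        d.2.1 ∈ Lang u ∧
        d.1 <:+ H s ∧ d.1.length < (H s).length ∧
        d.2.2 <+: H p ∧ d.2.2.length < (H p).length ∧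
        ([s] ++ d.2.1 ++ [p]) ∈ Lang u

/-- The incidence matrix of a substitution, with real entries. -/
def incMat [Fintype A] [DecidableEq A] (H : A → List A) : Matrix A A ℝ :=
  fun a b => ((H a).count b : ℝ)

/-- `lam` is the Perron–Frobenius eigenvalue of the incidence matrix of the (primitive)
substitution `H`: it admits an entrywise positive eigenvector. -/
def IsPerronValue [Fintype A] [DecidableEq A] (H : A → List A) (lam : ℝ) : Prop :=
  ∃ v : A → ℝ, (∀ a, 0 < v a) ∧ (incMat H).mulVec v = lam • v

/-- Concatenation of a finite word with an infinite word. -/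
def catWord (S : List A) (y : ℕ → A) : ℕ → A :=
  fun n => S.getD n (y (n - S.length))

/-- The Thue–Morse substitution on the alphabet `Bool` (`false = 0`, `true = 1`):
`0 ↦ 01`, `1 ↦ 10`. -/
def tm : Bool → List Bool := fun a => if a then [true, false] else [false, true]

namespace TMaux

lemma tm_eq (a : Bool) : tm a = [a, !a] := by cases a <;> rfl

lemma wm_nil : wordMap tm [] = [] := rfl

lemma wm_cons (a : Bool) (l : List Bool) :
    wordMap tm (a :: l) = a :: (!a) :: wordMap tm l := by
  simp [wordMap, List.flatMap_cons, tm_eq]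

lemma wm_append (l l' : List Bool) :
    wordMap tm (l ++ l') = wordMap tm l ++ wordMap tm l' := by
  simp [wordMap]

lemma wm_length (l : List Bool) : (wordMap tm l).length = 2 * l.length := by
  induction l with
  | nil => rfl
  | cons a l ih => rw [wm_cons]; simp only [List.length_cons, ih]; omega

lemma wm_getElem_even (l : List Bool) (q : ℕ) (h : q < l.length) :
    (wordMap tm l)[2*q]'(by rw [wm_length]; omega) = l[q] := by
  induction l generalizing q with
  | nil => simp at h
  | cons a l ih =>
    cases q with
    | zero => simp [wm_cons]
    | succ q =>
      have e : 2 * (q+1) = (2*q) + 1 + 1 := by ring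
      simp only [wm_cons, e, List.getElem_cons_succ]
      exact ih q (by simpa using h)

lemma wm_getElem_odd (l : List Bool) (q : ℕ) (h : q < l.length) :
    (wordMap tm l)[2*q+1]'(by rw [wm_length]; omega) = !l[q] := by
  induction l generalizing q with
  | nil => simp at h
  | cons a l ih =>
    cases q with
    | zero => simp [wm_cons]
    | succ q =>
      have e : 2 * (q+1) + 1 = (2*q+1) + 1 + 1 := by ring
      simp only [wm_cons, e, List.getElem_cons_succ]
      exact ih q (by simpa using h)

lemma substSeq_even (y : ℕ → Bool) (j : ℕ) : substSeq tm y (2*j) = y j := by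
  unfold substSeq
  have hlen : (wordMap tm ((List.range (2*j+1)).map y)).length = 2*(2*j+1) := by
    rw [wm_length]; simp
  rw [List.getD_eq_getElem _ _ (by rw [hlen]; omega)]
  rw [wm_getElem_even _ j (by simp; omega)]
  simp

lemma substSeq_odd (y : ℕ → Bool) (j : ℕ) : substSeq tm y (2*j+1) = !y j := by
  unfold substSeq
  have hlen : (wordMap tm ((List.range (2*j+1+1)).map y)).length = 2*(2*j+2) := by
    rw [wm_length]; simp
  rw [List.getD_eq_getElem _ _ (by rw [hlen]; omega)]
  rw [wm_getElem_odd _ j (by simp; omega)]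
  simp

end TMaux
namespace TMaux

def OccAt (u : ℕ → Bool) (w : List Bool) (i : ℕ) : Prop :=
  ∀ m (h : m < w.length), w[m] = u (i + m)

lemma factorAt_length (u : ℕ → Bool) (i n : ℕ) : (factorAt u i n).length = n := by
  simp [factorAt]

lemma factorAt_getElem (u : ℕ → Bool) {i n m : ℕ} (hm : m < (factorAt u i n).length) :
    (factorAt u i n)[m] = u (i + m) := by
  simp [factorAt]

lemma mem_lang_iff (u : ℕ → Bool) {w : List Bool} :
    w ∈ Lang u ↔ ∃ i, OccAt u w i := by
  constructor
  · rintro ⟨i, hw⟩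
    refine ⟨i, fun m hm => ?_⟩
    rw [List.getElem_of_eq hw hm, factorAt_getElem]
  · rintro ⟨i, h⟩
    refine ⟨i, ?_⟩
    apply List.ext_getElem (by simp [factorAt])
    intro m hm hm'
    rw [factorAt_getElem, h m hm]

lemma lang_infix (u : ℕ → Bool) {v w : List Bool} (hv : v ∈ Lang u) (h : w <:+: v) :
    w ∈ Lang u := by
  rw [mem_lang_iff] at hv ⊢
  obtain ⟨i, hi⟩ := hv
  obtain ⟨s, t, rfl⟩ := h
  rw [List.append_assoc] at hi
  refine ⟨i + s.length, fun m hm => ?_⟩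
  have h2 : s.length + m < (s ++ (w ++ t)).length := by simp; omega
  have h3 := hi (s.length + m) h2
  rw [List.getElem_append_right (by omega)] at h3
  simp only [Nat.add_sub_cancel_left] at h3
  rw [List.getElem_append_left hm] at h3
  rw [h3]; ring_nf

section
variable {u : ℕ → Bool} (hu : IsFixedPointSubst tm u)
include hu

lemma u_even (j : ℕ) : u (2*j) = u j := by
  conv_lhs => rw [← hu]
  exact substSeq_even u j

lemma u_odd (j : ℕ) : u (2*j+1) = !u j := by
  conv_lhs => rw [← hu]
  exact substSeq_odd u j

lemma occ_wm {w : List Bool} {i : ℕ} (h : OccAt u w i) : OccAt u (wordMap tm w) (2*i) := by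
  intro m hm
  have hm' : m < 2 * w.length := by rwa [wm_length] at hm
  obtain ⟨q, hq⟩ : ∃ q, m = 2*q ∨ m = 2*q+1 := ⟨m/2, by omega⟩
  rcases hq with rfl | rfl
  · rw [wm_getElem_even _ q (by omega), h q (by omega)]
    have e : 2*i + 2*q = 2*(i+q) := by ring
    rw [e, u_even hu]
  · rw [wm_getElem_odd _ q (by omega), h q (by omega)]
    have e : 2*i + (2*q+1) = 2*(i+q)+1 := by ring
    rw [e, u_odd hu]

lemma lang_wm {w : List Bool} (hw : w ∈ Lang u) : wordMap tm w ∈ Lang u := by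
  rw [mem_lang_iff] at hw ⊢
  obtain ⟨i, hi⟩ := hw
  exact ⟨2*i, occ_wm hu hi⟩

lemma lang_wm_pow {w : List Bool} (hw : w ∈ Lang u) (j : ℕ) :
    (wordMap tm)^[j] w ∈ Lang u := by
  induction j with
  | zero => simpa
  | succ j ih => rw [Function.iterate_succ_apply']; exact lang_wm hu ih

lemma not_cube (j : ℕ) : ¬ (u j = u (j+1) ∧ u (j+1) = u (j+2)) := by
  obtain ⟨m, hm⟩ : ∃ m, j = 2*m ∨ j = 2*m+1 := ⟨j/2, by omega⟩
  rcases hm with rfl | rfl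
  · rintro ⟨h1, -⟩
    rw [u_even hu, u_odd hu] at h1
    simp at h1
  · rintro ⟨-, h2⟩
    have e1 : 2*m+1+1 = 2*(m+1) := by ring
    have e2 : 2*m+1+2 = 2*(m+1)+1 := by ring
    rw [e1, e2, u_even hu, u_odd hu] at h2
    simp at h2

lemma not111 : ([true, true, true] : List Bool) ∉ Lang u := by
  intro h
  obtain ⟨i, hi⟩ := (mem_lang_iff u).1 h
  have a0 : u i = true := by simpa using (hi 0 (by norm_num)).symm
  have a1 : u (i+1) = true := by simpa using (hi 1 (by norm_num)).symm
  have a2 : u (i+2) = true := by simpa using (hi 2 (by norm_num)).symm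
  exact not_cube hu i ⟨by rw [a0, a1], by rw [a1, a2]⟩

lemma not_overlap (a : Bool) : ([a, !a, a, !a, a] : List Bool) ∉ Lang u := by
  intro h
  obtain ⟨i, hi⟩ := (mem_lang_iff u).1 h
  have a0 : u i = a := by simpa using (hi 0 (by norm_num)).symm
  have a1 : u (i+1) = !a := by simpa using (hi 1 (by norm_num)).symm
  have a2 : u (i+2) = a := by simpa using (hi 2 (by norm_num)).symm
  have a3 : u (i+3) = !a := by simpa using (hi 3 (by norm_num)).symm
  have a4 : u (i+4) = a := by simpa using (hi 4 (by norm_num)).symm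
  obtain ⟨m, hm⟩ : ∃ m, i = 2*m ∨ i = 2*m+1 := ⟨i/2, by omega⟩
  rcases hm with rfl | rfl
  · -- u m = u (m+1) = u (m+2) = a
    have b0 : u m = a := by rw [← u_even hu]; exact a0
    have b1 : u (m+1) = a := by rw [← u_even hu]; rw [show 2*(m+1) = 2*m+2 by ring]; exact a2
    have b2 : u (m+2) = a := by rw [← u_even hu]; rw [show 2*(m+2) = 2*m+4 by ring]; exact a4
    exact not_cube hu m ⟨by rw [b0, b1], by rw [b1, b2]⟩
  · -- u m = u (m+1) = u (m+2) = !a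
    have b0 : u m = !a := by
      have := u_odd hu m; rw [a0] at this; cases a <;> simp_all
    have b1 : u (m+1) = !a := by
      rw [← u_even hu]; rw [show 2*(m+1) = 2*m+1+1 by ring]; exact a1
    have b2 : u (m+2) = !a := by
      rw [← u_even hu]; rw [show 2*(m+2) = 2*m+1+3 by ring]; exact a3
    exact not_cube hu m ⟨by rw [b0, b1], by rw [b1, b2]⟩

end
end TMaux
namespace TMaux
section
variable {u : ℕ → Bool} (hu : IsFixedPointSubst tm u)
include hu

lemma occ_even {v : List Bool} {c : Bool} {j : ℕ}
    (h : OccAt u (wordMap tm v ++ [c]) (2*j)) : OccAt u (v ++ [c]) j := by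
  intro m hm
  have hm' : m < v.length + 1 := by simpa using hm
  have hlen : (wordMap tm v).length = 2 * v.length := wm_length v
  rcases Nat.lt_or_ge m v.length with hlt | hge
  · have h2 := h (2*m) (by simp [hlen]; omega)
    rw [List.getElem_append_left (by omega)] at h2
    rw [wm_getElem_even _ m hlt] at h2
    rw [List.getElem_append_left hlt]
    rw [h2, show 2*j + 2*m = 2*(j+m) by ring, u_even hu]
  · have hme : m = v.length := by omega
    subst hme
    have h2 := h (2*v.length) (by simp [hlen])
    rw [List.getElem_append_right (by omega)] at h2
    rw [List.getElem_append_right (by omega)]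
    simp only [hlen] at h2
    simp only [Nat.sub_self] at h2 ⊢
    rw [h2, show 2*j + 2*v.length = 2*(j+v.length) by ring, u_even hu]

lemma occ_odd {v : List Bool} {c : Bool} {j : ℕ}
    (h : OccAt u (wordMap tm v ++ [c]) (2*j+1)) :
    ∀ q, (hq : q + 1 < v.length) → v[q+1] = v[q]'(by omega) := by
  intro q hq
  have hlen : (wordMap tm v).length = 2 * v.length := wm_length v
  have h1 := h (2*q+1) (by simp [hlen]; omega)
  rw [List.getElem_append_left (by omega), wm_getElem_odd _ q (by omega)] at h1
  have h2 := h (2*(q+1)) (by simp [hlen]; omega)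
  rw [List.getElem_append_left (by omega)] at h2
  rw [wm_getElem_even _ (q+1) hq] at h2
  rw [show 2*j+1 + (2*q+1) = 2*(j+q+1) from by ring, u_even hu] at h1
  rw [show 2*j+1 + 2*(q+1) = 2*(j+q+1)+1 from by ring, u_odd hu] at h2
  rw [h2, ← h1]
  simp

omit hu in
lemma const_contra {v : List Bool}
    (hstep : ∀ q, (hq : q + 1 < v.length) → v[q+1] = v[q]'(by omega))
    (ht : true ∈ v) (hf : false ∈ v) : False := by
  have h0 : 0 < v.length := List.length_pos_iff.2 (List.ne_nil_of_mem ht)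
  have hall : ∀ q, (hq : q < v.length) → v[q] = v[0]'h0 := by
    intro q
    induction q with
    | zero => intro _; rfl
    | succ q ih => intro hq; rw [hstep q hq, ih (by omega)]
  obtain ⟨p, hp, hpe⟩ := List.mem_iff_getElem.1 ht
  obtain ⟨r, hr, hre⟩ := List.mem_iff_getElem.1 hf
  rw [hall p hp] at hpe
  rw [hall r hr] at hre
  rw [hpe] at hre
  cases hre

lemma lemA {v : List Bool} {c : Bool} (hv : v ++ [c] ∉ Lang u)
    (ht : true ∈ v) (hf : false ∈ v) :
    wordMap tm v ++ [c] ∉ Lang u := by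
  intro hmem
  obtain ⟨i, hi⟩ := (mem_lang_iff u).1 hmem
  obtain ⟨j, hj⟩ : ∃ j, i = 2*j ∨ i = 2*j+1 := ⟨i/2, by omega⟩
  rcases hj with rfl | rfl
  · exact hv ((mem_lang_iff u).2 ⟨j, occ_even hu hi⟩)
  · exact const_contra (occ_odd hu hi) ht hf

lemma lemB {v₀ : Bool} {v' : List Bool} {c : Bool}
    (hv : (v₀ :: v') ++ [c] ∉ Lang u) (ht : true ∈ v') (hf : false ∈ v') :
    ((!v₀) :: (wordMap tm v' ++ [c])) ∉ Lang u := by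
  intro hmem
  obtain ⟨i, hi⟩ := (mem_lang_iff u).1 hmem
  have hocc : OccAt u (wordMap tm v' ++ [c]) (i+1) := by
    intro m hm
    have h2 := hi (m+1) (by simpa using hm)
    rw [List.getElem_cons_succ] at h2
    rw [h2]; ring_nf
  have h0 : u i = !v₀ := by simpa using (hi 0 (by simp)).symm
  obtain ⟨j, hj⟩ : ∃ j, i + 1 = 2*j+1 ∨ i + 1 = 2*(j+1) := ⟨i/2, by omega⟩
  rcases hj with hj | hj
  · rw [hj] at hocc
    exact const_contra (occ_odd hu hocc) ht hf
  · rw [hj] at hocc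
    have hoccv : OccAt u (v' ++ [c]) (j+1) := occ_even hu hocc
    have hij : i = 2*j+1 := by omega
    have huj : u j = v₀ := by
      rw [hij, u_odd hu] at h0
      cases v₀ <;> simp_all
    apply hv
    apply (mem_lang_iff u).2
    refine ⟨j, fun m hm => ?_⟩
    cases m with
    | zero => simpa using huj.symm
    | succ m =>
      have h3 := hoccv m (by simpa using hm)
      have h4 : (v₀ :: v' ++ [c])[m+1]'hm = (v' ++ [c])[m]'(by simp at hm ⊢; omega) :=
        List.getElem_cons_succ ..
      rw [h4, h3]
      ring_nf

end
end TMaux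
namespace TMaux

lemma wm_pow_append (m : ℕ) (z₁ z₂ : List Bool) :
    (wordMap tm)^[m] (z₁ ++ z₂) = (wordMap tm)^[m] z₁ ++ (wordMap tm)^[m] z₂ := by
  induction m generalizing z₁ z₂ with
  | zero => simp
  | succ m ih =>
    simp only [Function.iterate_succ_apply, wm_append]
    exact ih _ _

lemma wm_pow_length (m : ℕ) (z : List Bool) :
    ((wordMap tm)^[m] z).length = 2^m * z.length := by
  induction m generalizing z with
  | zero => simp
  | succ m ih =>
    simp only [Function.iterate_succ_apply', wm_length, ih]
    ring

lemma wm_pow_take (m j : ℕ) (z : List Bool) (h : j ≤ z.length) :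
    ((wordMap tm)^[m] z).take (2^m * j) = (wordMap tm)^[m] (z.take j) := by
  conv_lhs => rw [← List.take_append_drop j z]
  rw [wm_pow_append]
  rw [List.take_left']
  rw [wm_pow_length]
  simp [Nat.min_eq_left h]

lemma wm_pow_drop (m j : ℕ) (z : List Bool) (h : j ≤ z.length) :
    ((wordMap tm)^[m] z).drop (2^m * j) = (wordMap tm)^[m] (z.drop j) := by
  conv_lhs => rw [← List.take_append_drop j z]
  rw [wm_pow_append]
  rw [List.drop_left']
  rw [wm_pow_length]
  simp [Nat.min_eq_left h]

lemma wm_pow_head (m : ℕ) (b : Bool) (z : List Bool) :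
    ∃ r, (wordMap tm)^[m] (b :: z) = b :: r := by
  induction m generalizing z with
  | zero => exact ⟨z, rfl⟩
  | succ m ih =>
    rw [Function.iterate_succ_apply, wm_cons]
    exact ih _

lemma wm_pow_take_one (m : ℕ) (b : Bool) (z : List Bool) :
    ((wordMap tm)^[m] (b :: z)).take 1 = [b] := by
  obtain ⟨r, hr⟩ := wm_pow_head m b z
  rw [hr]; rfl

lemma self_mem_pow (m : ℕ) (b : Bool) : b ∈ (wordMap tm)^[m] [b] := by
  obtain ⟨r, hr⟩ := wm_pow_head m b []
  rw [hr]; exact List.mem_cons_self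

lemma drop_two (k : ℕ) (l : List Bool) :
    (wordMap tm l).drop (2*k) = wordMap tm (l.drop k) := by
  induction k generalizing l with
  | zero => simp
  | succ k ih =>
    cases l with
    | nil => simp [wm_nil]
    | cons a l =>
      rw [wm_cons, show 2*(k+1) = (2*k)+1+1 by ring]
      rw [List.drop_succ_cons, List.drop_succ_cons, List.drop_succ_cons, ih]

section
variable {u : ℕ → Bool} (hu : IsFixedPointSubst tm u)
include hu

lemma neg_main : ∀ m (a : Bool) (k : ℕ), k < 2^m →
    ((wordMap tm)^[m] [a, !a, a, !a] ++ [a]).drop k ∉ Lang u := by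
  intro m
  induction m with
  | zero =>
    intro a k hk
    have hk0 : k = 0 := by omega
    subst hk0
    simpa using not_overlap hu a
  | succ m ih =>
    intro a k hk
    set V := (wordMap tm)^[m] [a, !a, a, !a] with hV
    have hVlen : V.length = 2^m * 4 := by rw [hV, wm_pow_length]; simp
    have hp : 0 < 2^m := Nat.pow_pos (by norm_num)
    have hiter : (wordMap tm)^[m+1] [a, !a, a, !a] = wordMap tm V :=
      Function.iterate_succ_apply' _ _ _
    -- membership of both letters in drops of V
    have hmemV : ∀ (b : Bool) (j : ℕ), j ≤ 2^m * 2 → b ∈ V.drop j := by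
      intro b j hj
      have hsplit : V = (wordMap tm)^[m] [a, !a] ++ ((wordMap tm)^[m] [a] ++ (wordMap tm)^[m] [!a]) := by
        rw [hV, show ([a, !a, a, !a] : List Bool) = [a, !a] ++ ([a] ++ [!a]) from rfl,
          wm_pow_append, wm_pow_append]
      have hlen2 : ((wordMap tm)^[m] [a, !a]).length = 2^m * 2 := by rw [wm_pow_length]; simp
      rw [hsplit, List.drop_append, hlen2]
      have : j - 2^m * 2 = 0 := by omega
      rw [this]
      simp only [List.drop_zero]
      apply List.mem_append_right
      have hb : b = a ∨ b = !a := by cases a <;> cases b <;> simp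
      rcases hb with rfl | rfl
      · exact List.mem_append_left _ (self_mem_pow m b)
      · exact List.mem_append_right _ (self_mem_pow m (!a))
    have hwmlen : (wordMap tm V).length = 2^m * 8 := by rw [wm_length, hVlen]; ring
    obtain ⟨k', hk'⟩ : ∃ k', k = 2*k' ∨ k = 2*k'+1 := ⟨k/2, by omega⟩
    have hk2 : k' < 2^m := by rw [pow_succ] at hk; omega
    have hdropIH : (V ++ [a]).drop k' ∉ Lang u := ih a k' hk2
    have hVd : (V ++ [a]).drop k' = V.drop k' ++ [a] := by
      rw [List.drop_append, show k' - V.length = 0 by omega]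
      simp
    rw [hVd] at hdropIH
    rcases hk' with rfl | rfl
    · rw [hiter]
      have e1 : (wordMap tm V ++ [a]).drop (2*k') = wordMap tm (V.drop k') ++ [a] := by
        rw [List.drop_append, show 2*k' - (wordMap tm V).length = 0 by omega]
        simp [drop_two]
      rw [e1]
      apply lemA hu hdropIH
      · exact hmemV true k' (by omega)
      · exact hmemV false k' (by omega)
    · rw [hiter]
      -- expose head of V.drop k'
      have hne : V.drop k' ≠ [] := by
        intro hemp
        have := congrArg List.length hemp
        simp [hVlen] at this
        omega
      obtain ⟨v₀, v', hv⟩ := List.exists_cons_of_ne_nil hne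
      have e1 : (wordMap tm V ++ [a]).drop (2*k'+1) = (!v₀) :: (wordMap tm v' ++ [a]) := by
        rw [List.drop_append, show 2*k'+1 - (wordMap tm V).length = 0 by omega]
        simp only [List.drop_zero]
        rw [← List.drop_drop, drop_two, hv, wm_cons]
        simp
      rw [e1]
      have hv'mem : ∀ b : Bool, b ∈ v' := by
        intro b
        have h2 : v' = V.drop (k'+1) := by
          rw [← List.drop_drop, hv]
          simp
        rw [h2]
        exact hmemV b (k'+1) (by omega)
      rw [hv] at hdropIH
      exact lemB hu hdropIH (hv'mem true) (hv'mem false)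

end
end TMaux
namespace TMaux

lemma shift_iter (y : ℕ → Bool) (p n : ℕ) : shift^[p] y n = y (n + p) := by
  induction p generalizing y with
  | zero => simp
  | succ p ih =>
    rw [Function.iterate_succ_apply, ih]
    simp [shift]
    ring_nf

lemma prefixWord_take (y : ℕ → Bool) (N M : ℕ) :
    (prefixWord y M).take N = prefixWord y (min N M) := by
  simp [prefixWord, ← List.map_take, List.take_range]

lemma prefixWord_eq_take (y : ℕ → Bool) {N M : ℕ} (h : N ≤ M) :
    prefixWord y N = (prefixWord y M).take N := by
  rw [prefixWord_take, Nat.min_eq_left h]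

lemma prefixWord_shift (y : ℕ → Bool) (p t : ℕ) :
    prefixWord (shift^[p] y) t = (prefixWord y (p + t)).drop p := by
  simp only [prefixWord, List.range_add, List.map_append]
  rw [List.drop_left' (by simp)]
  rw [List.map_map]
  apply List.map_congr_left
  intro a _
  simp [shift_iter, Function.comp, Nat.add_comm]

lemma prefix_substSeq (y : ℕ → Bool) (m : ℕ) :
    prefixWord (substSeq tm y) (2*m) = wordMap tm (prefixWord y m) := by
  apply List.ext_getElem (by simp [prefixWord, wm_length])
  intro i h1 h2
  have hi : i < 2*m := by simpa [prefixWord] using h1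
  obtain ⟨q, hq⟩ : ∃ q, i = 2*q ∨ i = 2*q+1 := ⟨i/2, by omega⟩
  have hql : q < (prefixWord y m).length := by simp [prefixWord]; omega
  rcases hq with rfl | rfl
  · rw [wm_getElem_even _ q hql]
    simp [prefixWord, substSeq_even]
  · rw [wm_getElem_odd _ q hql]
    simp [prefixWord, substSeq_odd]

lemma prefix_substSeq_pow (y : ℕ → Bool) (n m : ℕ) :
    prefixWord ((substSeq tm)^[n] y) (2^n * m) = (wordMap tm)^[n] (prefixWord y m) := by
  induction n generalizing y with
  | zero => simp
  | succ n ih =>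
    rw [Function.iterate_succ_apply', Function.iterate_succ_apply']
    rw [show 2^(n+1) * m = 2 * (2^n * m) by ring]
    rw [prefix_substSeq, ih]

lemma delta_eq {u y : ℕ → Bool} {m : ℕ} (h1 : prefixWord y m ∈ Lang u)
    (h2 : prefixWord y (m+1) ∉ Lang u) : delta u y = m := by
  have hbdd : ∀ n, prefixWord y n ∈ Lang u → n ≤ m := by
    intro n hn
    by_contra hlt
    push_neg at hlt
    apply h2
    have hpre : prefixWord y (m+1) <+: prefixWord y n := by
      rw [prefixWord_eq_take y (by omega : m+1 ≤ n)]
      exact List.take_prefix _ _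
    exact lang_infix u hn hpre.isInfix
  unfold delta
  apply le_antisymm
  · exact csSup_le ⟨m, h1⟩ hbdd
  · exact le_csSup ⟨m, fun n hn => hbdd n hn⟩ h1

end TMaux
namespace TMaux
section
variable {u : ℕ → Bool} (hu : IsFixedPointSubst tm u)
include hu

lemma mem_words : ([true, true] : List Bool) ∈ Lang u ∧
    ([false, true, false, true] : List Bool) ∈ Lang u := by
  have h0 : ∀ j, u (2*j) = u j := u_even hu
  have h1 : ∀ j, u (2*j+1) = !u j := u_odd hu
  have e1 : u 1 = !u 0 := by have := h1 0; norm_num at this; exact this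
  have e2 : u 2 = !u 0 := by have := h0 1; norm_num at this; rw [this, e1]
  have e3 : u 3 = u 0 := by have := h1 1; norm_num at this; rw [this, e1]; simp
  have e4 : u 4 = !u 0 := by have := h0 2; norm_num at this; rw [this, e2]
  have e5 : u 5 = u 0 := by have := h1 2; norm_num at this; rw [this, e2]; simp
  have e6 : u 6 = u 0 := by have := h0 3; norm_num at this; rw [this, e3]
  have e10 : u 10 = u 0 := by have := h0 5; norm_num at this; rw [this, e5]
  have e11 : u 11 = !u 0 := by have := h1 5; norm_num at this; rw [this, e5]
  have e12 : u 12 = u 0 := by have := h0 6; norm_num at this; rw [this, e6]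
  have e13 : u 13 = !u 0 := by have := h1 6; norm_num at this; rw [this, e6]
  cases ha : u 0
  · constructor
    · exact (mem_lang_iff u).2 ⟨1, fun m hm => by
        simp only [List.length_cons, List.length_nil] at hm
        interval_cases m <;> simp [e1, e2, ha]⟩
    · exact (mem_lang_iff u).2 ⟨10, fun m hm => by
        simp only [List.length_cons, List.length_nil] at hm
        interval_cases m <;> simp [e10, e11, e12, e13, ha]⟩
  · constructor
    · exact (mem_lang_iff u).2 ⟨5, fun m hm => by
        simp only [List.length_cons, List.length_nil] at hm
        interval_cases m <;> simp [e5, e6, ha]⟩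
    · exact (mem_lang_iff u).2 ⟨2, fun m hm => by
        simp only [List.length_cons, List.length_nil] at hm
        interval_cases m <;> simp [e2, e3, e4, e5, ha]⟩

end
end TMaux


/-- For Thue–Morse and `x` beginning with `111` (so `x ∉ K` and
`δ(x) = 2`), for every `n ≥ 1`: `δ(σᵏ(Hⁿ(x))) = 2^{n+1} - k` for `0 ≤ k < 2^{n-1}`,
`δ(σ^{2^{n-1}+l}(Hⁿ(x))) = 2^{n+1} - l` for `0 ≤ l ≤ 2^{n-1} - 1`; in particular
`Hⁿ(x)` has an accident at time `2^{n-1}`. -/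
theorem thue_morse_delta_near_111
    (u : ℕ → Bool) (hu : IsFixedPointSubst tm u)
    (x : ℕ → Bool) (hx3 : prefixWord x 3 = [true, true, true]) :
    x ∉ orbitClosure u ∧ delta u x = 2 ∧
      ∀ n : ℕ, 1 ≤ n →
        (∀ k < 2 ^ (n - 1),
          delta u (shift^[k] ((substSeq tm)^[n] x)) = 2 ^ (n + 1) - k) ∧
        (∀ l ≤ 2 ^ (n - 1) - 1,
          delta u (shift^[2 ^ (n - 1) + l] ((substSeq tm)^[n] x)) = 2 ^ (n + 1) - l) ∧
        AccidentAt u ((substSeq tm)^[n] x) (2 ^ (n - 1)) := by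
  have hx0 : x 0 = true ∧ x 1 = true ∧ x 2 = true := by
    have h : prefixWord x 3 = [x 0, x 1, x 2] := rfl
    rw [h] at hx3
    simpa using hx3
  refine ⟨?_, ?_, ?_⟩
  · -- x ∉ orbitClosure u
    intro hmem
    have hopen : IsOpen {y : ℕ → Bool | y 0 = true ∧ y 1 = true ∧ y 2 = true} := by
      have h : ∀ i : ℕ, IsOpen {y : ℕ → Bool | y i = true} := by
        intro i
        have e : {y : ℕ → Bool | y i = true} = (fun y : ℕ → Bool => y i) ⁻¹' {true} := by
          ext z; simp
        rw [e]
        exact (isOpen_discrete ({true} : Set Bool)).preimage (continuous_apply i)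
      have e : {y : ℕ → Bool | y 0 = true ∧ y 1 = true ∧ y 2 = true}
          = {y : ℕ → Bool | y 0 = true} ∩ ({y : ℕ → Bool | y 1 = true} ∩ {y : ℕ → Bool | y 2 = true}) := rfl
      rw [e]
      exact (h 0).inter ((h 1).inter (h 2))
    have hsub : orbitClosure u ⊆ {y : ℕ → Bool | ¬(y 0 = true ∧ y 1 = true ∧ y 2 = true)} := by
      apply closure_minimal
      · rintro y ⟨n, rfl⟩ ⟨ha, hb, hc⟩
        rw [TMaux.shift_iter] at ha hb hc
        have ha' : u n = true := by simpa using ha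
        have hb' : u (n+1) = true := by rw [Nat.add_comm] at hb; exact hb
        have hc' : u (n+2) = true := by rw [Nat.add_comm] at hc; exact hc
        exact TMaux.not_cube hu n ⟨ha'.trans hb'.symm, hb'.trans hc'.symm⟩
      · exact hopen.isClosed_compl
    exact hsub hmem ⟨hx0.1, hx0.2.1, hx0.2.2⟩
  · -- delta u x = 2
    apply TMaux.delta_eq (u := u) (y := x) (m := 2)
    · have h2 : prefixWord x 2 = [true, true] := by
        have h : prefixWord x 2 = [x 0, x 1] := rfl
        rw [h, hx0.1, hx0.2.1]
      rw [h2]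
      exact (TMaux.mem_words hu).1
    · rw [show (2:ℕ)+1 = 3 from rfl, hx3]
      exact TMaux.not111 hu
  · intro n hn
    obtain ⟨m, rfl⟩ : ∃ m, n = m + 1 := ⟨n - 1, by omega⟩
    have hp : 0 < 2^m := Nat.pow_pos (by norm_num)
    set y := (substSeq tm)^[m+1] x with hy
    have hW : prefixWord y (2^m * 6) = (wordMap tm)^[m] [true, false, true, false, true, false] := by
      have h1 : prefixWord y (2^(m+1) * 3) = (wordMap tm)^[m+1] (prefixWord x 3) :=
        TMaux.prefix_substSeq_pow x (m+1) 3
      rw [hx3] at h1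
      rw [show 2^m * 6 = 2^(m+1)*3 by ring, h1, Function.iterate_succ_apply]
      congr 1
    set W := (wordMap tm)^[m] [true, false, true, false, true, false] with hWdef
    have hpre : ∀ N, N ≤ 2^m * 6 → prefixWord y N = W.take N := by
      intro N hN
      rw [TMaux.prefixWord_eq_take y hN, hW]
    have t4 : W.take (2^m * 4) = (wordMap tm)^[m] [true, false, true, false] := by
      rw [hWdef, TMaux.wm_pow_take m 4 _ (by norm_num)]
      rfl
    have t41 : W.take (2^m * 4 + 1) = (wordMap tm)^[m] [true, false, true, false] ++ [true] := by
      rw [List.take_add, t4]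
      congr 1
      rw [hWdef, TMaux.wm_pow_drop m 4 _ (by norm_num)]
      exact TMaux.wm_pow_take_one m true _
    have t5 : W.take (2^m * 5) = (wordMap tm)^[m] [true, false, true, false, true] := by
      rw [hWdef, TMaux.wm_pow_take m 5 _ (by norm_num)]
      rfl
    have t51 : W.take (2^m * 5 + 1) = (wordMap tm)^[m] [true, false, true, false, true] ++ [false] := by
      rw [List.take_add, t5]
      congr 1
      rw [hWdef, TMaux.wm_pow_drop m 5 _ (by norm_num)]
      exact TMaux.wm_pow_take_one m false _
    have d5 : ((wordMap tm)^[m] [true, false, true, false, true]).drop (2^m)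
        = (wordMap tm)^[m] [false, true, false, true] := by
      rw [show (2^m : ℕ) = 2^m * 1 by ring, TMaux.wm_pow_drop m 1 _ (by norm_num)]
      rfl
    have mem1 : (wordMap tm)^[m] [true, false, true, false] ∈ Lang u := by
      have h2 : (wordMap tm)^[m+1] [true, true] ∈ Lang u :=
        TMaux.lang_wm_pow hu (TMaux.mem_words hu).1 (m+1)
      rw [Function.iterate_succ_apply] at h2
      have e : wordMap tm [true, true] = [true, false, true, false] := rfl
      rw [e] at h2
      exact h2
    have mem2 : (wordMap tm)^[m] [false, true, false, true] ∈ Lang u :=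
      TMaux.lang_wm_pow hu (TMaux.mem_words hu).2 m
    have hk : ∀ k < 2^m, delta u (shift^[k] y) = 2^(m+2) - k := by
      intro k hkm
      apply TMaux.delta_eq
      · rw [TMaux.prefixWord_shift,
          show k + (2^(m+2) - k) = 2^m * 4 by rw [pow_succ, pow_succ]; omega]
        rw [hpre _ (by omega), t4]
        exact TMaux.lang_infix u mem1 (List.drop_suffix _ _).isInfix
      · rw [TMaux.prefixWord_shift,
          show k + (2^(m+2) - k + 1) = 2^m * 4 + 1 by rw [pow_succ, pow_succ]; omega]
        rw [hpre _ (by omega), t41]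
        have h3 := TMaux.neg_main hu m true k hkm
        simpa using h3
    have hl : ∀ l < 2^m, delta u (shift^[2^m + l] y) = 2^(m+2) - l := by
      intro l hlm
      apply TMaux.delta_eq
      · rw [TMaux.prefixWord_shift,
          show 2^m + l + (2^(m+2) - l) = 2^m * 5 by rw [pow_succ, pow_succ]; omega]
        rw [hpre _ (by omega), t5]
        rw [← List.drop_drop, d5]
        exact TMaux.lang_infix u mem2 (List.drop_suffix _ _).isInfix
      · rw [TMaux.prefixWord_shift,
          show 2^m + l + (2^(m+2) - l + 1) = 2^m * 5 + 1 by rw [pow_succ, pow_succ]; omega]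
        rw [hpre _ (by omega), t51]
        rw [← List.drop_drop]
        rw [List.drop_append,
          show 2^m - ((wordMap tm)^[m] [true, false, true, false, true]).length = 0 by
            rw [TMaux.wm_pow_length]; simp; omega]
        rw [d5]
        simp only [List.drop_zero]
        have h3 := TMaux.neg_main hu m false l hlm
        simpa using h3
    have hdy : delta u y = 2^(m+2) := by
      have h2 := hk 0 hp
      simpa using h2
    have hexp : m + 1 - 1 = m := rfl
    refine ⟨?_, ?_, ?_⟩
    · intro k hk2
      rw [hexp] at hk2
      exact hk k hk2
    · intro l hl2
      rw [hexp] at hl2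
      have hlm : l < 2^m := by omega
      exact hl l hlm
    · refine ⟨by rw [hexp]; exact hp, ?_, ?_⟩
      · rw [hexp, hdy]
        have h2 := hl 0 hp
        rw [show 2^m + 0 = 2^m by omega] at h2
        rw [h2]
        have h4 : 2^(m+2) = 4 * 2^m := by ring
        omega
      · intro i hi
        rw [hexp] at hi
        rw [hdy, hk i hi]
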